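/- A semilattice equipped with the ideal convexity (convex sets are the downward-closed subsemilattices) is a convex geometry if and only if it is a chain. -/
import Mathlib


/-- The ideal convexity on a semilattice: lower subsemilattices. -/
def IdealConvex {S : Type*} [SemilatticeSup S] (T : Set S) : Prop :=
  (∀ ⦃x⦄, x ∈ T → ∀ ⦃y⦄, y ∈ T → x ⊔ y ∈ T) ∧ ∀ ⦃x y : S⦄, y ∈ T → x ≤ y → x ∈ T

def idealHull {S : Type*} [SemilatticeSup S] (A : Set S) : Set S :=
  ⋂₀ {T | IdealConvex T ∧ A ⊆ T}

/-- A semilattice with the ideal convexity is a convex geometry iff it is a chain. -/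
theorem idealConvexity_convexGeometry_iff_chain {S : Type*} [SemilatticeSup S] :
    (∀ K : Set S, IdealConvex K → ∀ x y : S, x ≠ y → x ∉ K → y ∉ K →
      y ∈ idealHull (K ∪ {x}) → x ∉ idealHull (K ∪ {y})) ↔
    ∀ a b : S, a ≤ b ∨ b ≤ a := by
  constructor
  · intro h a b
    by_contra hab
    push_neg at hab
    obtain ⟨hab1, hab2⟩ := hab
    set K : Set S := {z | z ≤ b} with hKdef
    have hK : IdealConvex K := ⟨fun p hp q hq => sup_le hp hq, fun p q hq hpq => hpq.trans hq⟩
    have hx : a ∉ K := hab1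
    have hy : a ⊔ b ∉ K := fun h' => hab1 (le_sup_left.trans h')
    have hne : a ≠ a ⊔ b := fun h' => hab2 (h' ▸ le_sup_right)
    have h1 : a ⊔ b ∈ idealHull (K ∪ {a}) := by
      intro T hT
      obtain ⟨⟨hsup, hdown⟩, hsub⟩ := hT
      exact hsup (hsub (Or.inr rfl)) (hsub (Or.inl (le_refl b)))
    have h2 : a ∈ idealHull (K ∪ {a ⊔ b}) := by
      intro T hT
      obtain ⟨⟨hsup, hdown⟩, hsub⟩ := hT
      exact hdown (hsub (Or.inr rfl)) le_sup_left
    exact h K hK a (a ⊔ b) hne hx hy h1 h2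
  · intro hchain K hK x y hne hxK hyK hyx hxy
    have key : ∀ u v : S, v ∈ idealHull (K ∪ {u}) → v ∈ K ∨ v ≤ u := by
      intro u v hv
      have hT : IdealConvex (K ∪ {z | z ≤ u}) := by
        constructor
        · rintro p (hp | hp) q (hq | hq)
          · exact Or.inl (hK.1 hp hq)
          · rcases hchain p q with h' | h'
            · exact Or.inr (sup_le (h'.trans hq) hq)
            · exact Or.inl (by rwa [sup_eq_left.mpr h'])
          · rcases hchain p q with h' | h'
            · exact Or.inl (by rwa [sup_eq_right.mpr h'])
            · exact Or.inr (sup_le hp (h'.trans hp))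
          · exact Or.inr (sup_le hp hq)
        · rintro p q (hq | hq) hpq
          · exact Or.inl (hK.2 hq hpq)
          · exact Or.inr (hpq.trans hq)
      have := hv (K ∪ {z | z ≤ u}) ⟨hT, by
        rintro z (hz | hz)
        · exact Or.inl hz
        · exact Or.inr (le_of_eq hz)⟩
      exact this
    have h1 : y ≤ x := (key x y hyx).resolve_left hyK
    have h2 : x ≤ y := (key y x hxy).resolve_left hxK
    exact hne (le_antisymm h2 h1)
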